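/- Let f : ℝ³ → ℝ be real-analytic on an open neighbourhood of the origin, and suppose there is an open neighbourhood W of (0,0) in ℝ² such that f(u, u·v, u·v·exp(v)) = 0 for all (u,v) ∈ W. Then f vanishes identically on some open neighbourhood of the origin in ℝ³. (Property of the Osgood mapping Θ(u,v) = (u, uv, uv·e^v): no nonzero analytic function defined near 0 ∈ ℝ³ vanishes on the image of any neighbourhood of 0 ∈ ℝ².) -/

import Mathlib

open Filter Topology Polynomial Finset

/-- `P(v) e^{cv} → 0` as `v → -∞`, for `c ≥ 1`. -/
lemma osgood_aux_tendsto (P : ℝ[X]) (c : ℕ) (hc : 1 ≤ c) :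
    Tendsto (fun v : ℝ => P.eval v * Real.exp (c * v)) atBot (𝓝 0) := by
  have h1 : Tendsto (fun x : ℝ => P.eval (-x) * Real.exp ((c : ℝ) * (-x))) atTop (𝓝 0) := by
    have h2 := (P.comp (-X)).tendsto_div_exp_atTop.abs
    rw [abs_zero] at h2
    apply squeeze_zero_norm' _ h2
    filter_upwards [eventually_ge_atTop (0 : ℝ)] with x hx
    have hle : (c : ℝ) * (-x) ≤ -x := by
      have : (1 : ℝ) ≤ (c : ℝ) := by exact_mod_cast hc
      nlinarith
    have hev : (P.comp (-X)).eval x = P.eval (-x) := by simp [eval_comp]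
    rw [hev]
    rw [Real.norm_eq_abs, abs_mul, abs_div, abs_of_pos (Real.exp_pos _),
      abs_of_pos (Real.exp_pos _), div_eq_mul_inv, ← Real.exp_neg]
    exact mul_le_mul_of_nonneg_left (Real.exp_le_exp.2 hle) (abs_nonneg _)
  have := h1.comp tendsto_neg_atBot_atTop
  simpa [Function.comp_def, mul_neg, neg_neg] using this

/-- A real polynomial whose values tend to `0` at `-∞` is zero. -/
lemma osgood_aux_poly_zero (P : ℝ[X]) (h : Tendsto (fun v : ℝ => P.eval v) atBot (𝓝 0)) :
    P = 0 := by
  rcases le_or_gt P.degree 0 with hd | hd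
  · have hP := eq_C_of_degree_le_zero hd
    have : P.coeff 0 = 0 := by
      have h2 : Tendsto (fun _ : ℝ => P.coeff 0) atBot (𝓝 (P.coeff 0)) := tendsto_const_nhds
      have h3 : Tendsto (fun v : ℝ => P.eval v) atBot (𝓝 (P.coeff 0)) := by
        convert h2 using 1; funext v; rw [hP]; simp
      exact tendsto_nhds_unique h3 h
    rw [hP, this, map_zero]
  · exfalso
    have habs : Tendsto (fun x : ℝ => ‖x‖) atBot atTop := by
      simpa [Real.norm_eq_abs] using (tendsto_abs_atBot_atTop (G := ℝ))
    have := P.tendsto_norm_atTop hd habs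
    exact not_tendsto_nhds_of_tendsto_atTop this 0 (by simpa using h.norm)

/-- Independence of `v^b e^{cv}`: exponential-polynomial identity. -/
lemma osgood_aux_indep : ∀ (N : ℕ) (Q : ℕ → ℝ[X]),
    (∀ v : ℝ, ∑ c ∈ Finset.range (N + 1), (Q c).eval v * Real.exp (c * v) = 0) →
    ∀ c, c ≤ N → Q c = 0 := by
  intro N
  induction N with
  | zero =>
    intro Q h c hc
    interval_cases c
    apply osgood_aux_poly_zero
    have : ∀ v : ℝ, (Q 0).eval v = 0 := by
      intro v; have := h v; simpa using this
    simp only [this]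
    exact tendsto_const_nhds
  | succ N ih =>
    intro Q h c hc
    have hQ0 : Q 0 = 0 := by
      apply osgood_aux_poly_zero
      have hrw : ∀ v : ℝ,
          (Q 0).eval v = -∑ c ∈ Finset.range (N + 1),
            (Q (c + 1)).eval v * Real.exp ((c + 1 : ℕ) * v) := by
        intro v
        have h2 := h v
        rw [Finset.sum_range_succ'] at h2
        push_cast at h2 ⊢
        simp only [Nat.cast_zero, zero_mul, Real.exp_zero, mul_one] at h2
        linarith
      simp only [hrw]
      have : Tendsto (fun v : ℝ => ∑ c ∈ Finset.range (N + 1),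
          (Q (c + 1)).eval v * Real.exp ((c + 1 : ℕ) * v)) atBot (𝓝 0) := by
        have := tendsto_finset_sum (Finset.range (N + 1))
          (fun c _ => osgood_aux_tendsto (Q (c + 1)) (c + 1) (Nat.succ_le_succ (Nat.zero_le c)))
        simpa using this
      simpa using this.neg
    have h' : ∀ v : ℝ, ∑ c ∈ Finset.range (N + 1),
        (Q (c + 1)).eval v * Real.exp (c * v) = 0 := by
      intro v
      have h2 := h v
      rw [Finset.sum_range_succ'] at h2
      simp only [hQ0, eval_zero, zero_mul, add_zero] at h2
      have h3 := congrArg (fun t => t * Real.exp (-v)) h2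
      simp only [zero_mul, Finset.sum_mul] at h3
      rw [← h3]
      apply Finset.sum_congr rfl
      intro c _
      rw [mul_assoc, ← Real.exp_add]
      push_cast
      ring_nf
    cases c with
    | zero => exact hQ0
    | succ c => exact ih (fun c => Q (c + 1)) h' c (by omega)

/-- If a finite combination `∑ K_s v^(b_s+c_s) e^(c_s v)` vanishes for all `v`, then
all fiber sums of the coefficients vanish. -/
lemma osgood_aux_fibers {ι : Type*} [Fintype ι] [DecidableEq ι] (K : ι → ℝ) (b c : ι → ℕ)
    (h : ∀ v : ℝ, ∑ s : ι, K s * v ^ (b s + c s) * Real.exp (c s * v) = 0) :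
    ∀ B C : ℕ, ∑ s ∈ Finset.univ.filter (fun s => b s = B ∧ c s = C), K s = 0 := by
  classical
  set N := (Finset.univ : Finset ι).sup c with hN
  set Q : ℕ → ℝ[X] := fun C' =>
    ∑ s ∈ Finset.univ.filter (fun s => c s = C'), Polynomial.C (K s) * X ^ (b s + c s) with hQdef
  have hQ : ∀ C', C' ≤ N → Q C' = 0 := by
    apply osgood_aux_indep N Q
    intro v
    have step1 : ∀ C' : ℕ, (Q C').eval v * Real.exp (C' * v)
        = ∑ s ∈ Finset.univ.filter (fun s => c s = C'),
            K s * v ^ (b s + c s) * Real.exp (c s * v) := by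
      intro C'
      rw [hQdef]
      simp only [eval_finset_sum, eval_mul, eval_C, eval_pow, eval_X, Finset.sum_mul]
      apply Finset.sum_congr rfl
      intro s hs
      rw [Finset.mem_filter] at hs
      rw [hs.2]
    simp only [step1]
    rw [Finset.sum_fiberwise_of_maps_to (g := c) (t := Finset.range (N + 1))
      (fun s _ => Finset.mem_range.mpr (Nat.lt_succ_of_le (Finset.le_sup (Finset.mem_univ s))))]
    exact h v
  intro B C
  by_cases hC : C ≤ N
  · have h0 := hQ C hC
    have hco := congrArg (fun P : ℝ[X] => P.coeff (B + C)) h0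
    simp only [hQdef, finset_sum_coeff, coeff_C_mul, coeff_X_pow, coeff_zero, mul_ite, mul_one,
      mul_zero] at hco
    rw [← Finset.sum_filter, Finset.filter_filter] at hco
    rw [← hco]
    apply Finset.sum_congr _ (fun _ _ => rfl)
    apply Finset.filter_congr
    intro x _
    constructor
    · rintro ⟨h1, h2⟩; exact ⟨h2, by omega⟩
    · rintro ⟨h1, h2⟩; exact ⟨by omega, h1⟩
  · have hemp : Finset.univ.filter (fun s => b s = B ∧ c s = C) = ∅ := by
      apply Finset.filter_eq_empty_iff.mpr
      intro s _
      rintro ⟨-, hcs⟩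
      exact hC (hcs ▸ Finset.le_sup (Finset.mem_univ s))
    rw [hemp, Finset.sum_empty]

/-- A continuous multilinear form on `ℝ³` whose diagonal vanishes on the Osgood curve
`v ↦ (1, v, v e^v)` for small `v` has vanishing diagonal everywhere. -/
lemma osgood_aux_multilinear (n : ℕ)
    (B : ContinuousMultilinearMap ℝ (fun _ : Fin n => ℝ × ℝ × ℝ) ℝ)
    (ε : ℝ) (hε : 0 < ε)
    (h : ∀ v : ℝ, |v| < ε → B (fun _ => (1, v, v * Real.exp v)) = 0) :
    ∀ y : ℝ × ℝ × ℝ, B (fun _ => y) = 0 := by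
  classical
  set e : Fin 3 → ℝ × ℝ × ℝ := ![(1, 0, 0), (0, 1, 0), (0, 0, 1)] with he
  set K : (Fin n → Fin 3) → ℝ := fun s => B (fun i => e (s i)) with hK
  set cnt : (Fin n → Fin 3) → Fin 3 → ℕ :=
    fun s j => (Finset.univ.filter (fun i => s i = j)).card with hcnt
  have expand : ∀ y : ℝ × ℝ × ℝ, B (fun _ => y) =
      ∑ s : Fin n → Fin 3,
        K s * (y.1 ^ cnt s 0 * y.2.1 ^ cnt s 1 * y.2.2 ^ cnt s 2) := by
    intro y
    have hy : (fun _ : Fin n => y)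
        = fun _ : Fin n => ∑ j : Fin 3, ![y.1, y.2.1, y.2.2] j • e j := by
      funext i
      simp [he, Fin.sum_univ_three, Prod.ext_iff]
    rw [hy, B.map_sum]
    apply Finset.sum_congr rfl
    intro s _
    rw [B.map_smul_univ]
    have hprod : ∀ i : Fin n, (fun i => ![y.1, y.2.1, y.2.2] (s i)) i
        = ![y.1, y.2.1, y.2.2] (s i) := fun _ => rfl
    have hp : (∏ i : Fin n, ![y.1, y.2.1, y.2.2] (s i))
        = y.1 ^ cnt s 0 * y.2.1 ^ cnt s 1 * y.2.2 ^ cnt s 2 := by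
      rw [← Finset.prod_fiberwise (Finset.univ : Finset (Fin n)) s
        (fun i => ![y.1, y.2.1, y.2.2] (s i))]
      have hinner : ∀ j : Fin 3,
          ∏ i ∈ Finset.univ.filter (fun i => s i = j), ![y.1, y.2.1, y.2.2] (s i)
          = ![y.1, y.2.1, y.2.2] j ^ cnt s j := by
        intro j
        rw [Finset.prod_congr rfl (fun i hi => by rw [(Finset.mem_filter.mp hi).2]),
          Finset.prod_const, hcnt]
      simp only [hinner]
      rw [Fin.prod_univ_three]
      norm_num
      left; rfl
    rw [smul_eq_mul, hp, mul_comm]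
  -- the restriction to the Osgood curve as an exponential polynomial
  set ψ : ℝ → ℝ := fun v => ∑ s : Fin n → Fin 3,
      K s * v ^ (cnt s 1 + cnt s 2) * Real.exp ((cnt s 2 : ℝ) * v) with hψ
  have hψ_eq : ∀ v : ℝ, ψ v = B (fun _ => (1, v, v * Real.exp v)) := by
    intro v
    rw [expand (1, v, v * Real.exp v), hψ]
    apply Finset.sum_congr rfl
    intro s _
    rw [one_pow, mul_pow, ← Real.exp_nat_mul, pow_add]
    ring
  have hψ_an : AnalyticOnNhd ℝ ψ Set.univ := by
    intro x _
    apply Finset.analyticAt_fun_sum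
    intro s _
    apply AnalyticAt.mul
    · exact analyticAt_const.mul ((analyticAt_id).pow _)
    · exact analyticAt_rexp.comp (analyticAt_const.mul analyticAt_id)
  have hψ_zero : ∀ v : ℝ, ψ v = 0 := by
    have hev : ψ =ᶠ[𝓝 (0 : ℝ)] 0 := by
      filter_upwards [Metric.ball_mem_nhds (0 : ℝ) hε] with v hv
      rw [hψ_eq]
      exact h v (by simpa [Real.dist_eq] using hv)
    intro v
    exact hψ_an.eqOn_zero_of_preconnected_of_eventuallyEq_zero isPreconnected_univ
      (Set.mem_univ 0) hev (Set.mem_univ v)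
  have hfib := osgood_aux_fibers K (fun s => cnt s 1) (fun s => cnt s 2)
    (fun v => by simpa [hψ] using hψ_zero v)
  intro y
  rw [expand y]
  have hsum_n : ∀ s : Fin n → Fin 3, cnt s 0 + cnt s 1 + cnt s 2 = n := by
    intro s
    have hcard := Finset.card_eq_sum_card_fiberwise
      (f := s) (s := (Finset.univ : Finset (Fin n))) (t := (Finset.univ : Finset (Fin 3)))
      (fun i _ => Finset.mem_univ (s i))
    rw [Finset.card_univ, Fintype.card_fin, Fin.sum_univ_three] at hcard
    simp only [hcnt]
    omega
  rw [← Finset.sum_fiberwise_of_maps_to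
    (g := fun s => (cnt s 1, cnt s 2))
    (t := Finset.univ.image (fun s => (cnt s 1, cnt s 2)))
    (fun s _ => Finset.mem_image_of_mem _ (Finset.mem_univ s))
    (fun s => K s * (y.1 ^ cnt s 0 * y.2.1 ^ cnt s 1 * y.2.2 ^ cnt s 2))]
  apply Finset.sum_eq_zero
  intro p _
  have hterm : ∀ s ∈ Finset.univ.filter (fun s => (cnt s 1, cnt s 2) = p),
      K s * (y.1 ^ cnt s 0 * y.2.1 ^ cnt s 1 * y.2.2 ^ cnt s 2)
      = K s * (y.1 ^ (n - p.1 - p.2) * y.2.1 ^ p.1 * y.2.2 ^ p.2) := by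
    intro s hs
    have hps := (Finset.mem_filter.mp hs).2
    have h1 : cnt s 1 = p.1 := congrArg Prod.fst hps
    have h2 : cnt s 2 = p.2 := congrArg Prod.snd hps
    have h0 : cnt s 0 = n - p.1 - p.2 := by have := hsum_n s; omega
    rw [h0, h1, h2]
  rw [Finset.sum_congr rfl hterm, ← Finset.sum_mul]
  have hset : Finset.univ.filter (fun s => (cnt s 1, cnt s 2) = p)
      = Finset.univ.filter (fun s => cnt s 1 = p.1 ∧ cnt s 2 = p.2) := by
    apply Finset.filter_congr
    intro x _
    rw [Prod.ext_iff]
  rw [hset, hfib p.1 p.2, zero_mul]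

/-- Property of the Osgood mapping `Θ(u,v) = (u, uv, uv·e^v)`: if `f` is real-analytic on an
open neighbourhood of the origin in `ℝ³` and vanishes on the image of a neighbourhood of
`(0,0) ∈ ℝ²` under `Θ`, then `f` vanishes identically near the origin. -/
theorem osgood_vanishing (f : ℝ × ℝ × ℝ → ℝ) (U : Set (ℝ × ℝ × ℝ))
    (hU : IsOpen U) (hU0 : (0 : ℝ × ℝ × ℝ) ∈ U)
    (hf : ∀ x ∈ U, AnalyticAt ℝ f x)
    (W : Set (ℝ × ℝ)) (hW : IsOpen W) (hW0 : ((0, 0) : ℝ × ℝ) ∈ W)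
    (hvan : ∀ p ∈ W, f (p.1, p.1 * p.2, p.1 * p.2 * Real.exp p.2) = 0) :
    ∃ V : Set (ℝ × ℝ × ℝ), IsOpen V ∧ (0 : ℝ × ℝ × ℝ) ∈ V ∧ ∀ x ∈ V, f x = 0 := by
  classical
  obtain ⟨p, hpAt⟩ := hf 0 hU0
  obtain ⟨r, hpb⟩ := hpAt
  set d : ℝ → ℝ × ℝ × ℝ := fun v => (1, v, v * Real.exp v) with hd
  -- the set of good parameters
  have hdcont : Continuous fun q : ℝ × ℝ => q.1 • d q.2 := by
    apply Continuous.smul continuous_fst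
    exact (continuous_const.prodMk ((continuous_snd).prodMk
      ((continuous_snd).mul (Real.continuous_exp.comp continuous_snd)))).comp continuous_id
  have hS : IsOpen {q : ℝ × ℝ | q ∈ W ∧ q.1 • d q.2 ∈ Metric.eball (0 : ℝ × ℝ × ℝ) r} := by
    exact hW.inter (hdcont.isOpen_preimage _ EMetric.isOpen_ball)
  have h00 : ((0, 0) : ℝ × ℝ) ∈ {q : ℝ × ℝ | q ∈ W ∧ q.1 • d q.2 ∈ Metric.eball (0 : ℝ × ℝ × ℝ) r} := by
    refine ⟨hW0, ?_⟩
    simp only [zero_smul]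
    exact EMetric.mem_ball_self hpb.r_pos
  obtain ⟨ε, hε, hball⟩ := Metric.isOpen_iff.mp hS _ h00
  have hmem : ∀ u v : ℝ, |u| < ε → |v| < ε →
      (u, v) ∈ W ∧ u • d v ∈ Metric.eball (0 : ℝ × ℝ × ℝ) r := by
    intro u v hu hv
    exact hball (by
      rw [Metric.mem_ball, Prod.dist_eq]
      simp only [Real.dist_eq, sub_zero]
      exact max_lt hu hv)
  -- the key step: each coefficient vanishes in the direction `d v` for small `v`
  have key : ∀ (n : ℕ) (v : ℝ), |v| < ε → p n (fun _ => d v) = 0 := by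
    intro n v hv
    set q : FormalMultilinearSeries ℝ ℝ ℝ :=
      fun m => ContinuousMultilinearMap.mkPiRing ℝ (Fin m) (p m (fun _ => d v)) with hq
    -- radius bound for q
    obtain ⟨r', hr'pos, hr'lt⟩ : ∃ r' : NNReal, 0 < r' ∧ (r' : ENNReal) < p.radius := by
      rcases ENNReal.lt_iff_exists_nnreal_btwn.mp (lt_of_lt_of_le hpb.r_pos hpb.r_le) with
        ⟨r', h1, h2⟩
      exact ⟨r', by exact_mod_cast h1, h2⟩
    have hsum := p.summable_norm_mul_pow hr'lt
    set M : NNReal := ‖d v‖₊ + 1 with hM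
    set t : NNReal := r' / M with ht
    have hMpos : 0 < M := lt_of_lt_of_le zero_lt_one le_add_self
    have htpos : 0 < t := div_pos hr'pos hMpos
    have hqsum : Summable fun m => ‖q m‖ * (t : ℝ) ^ m := by
      apply Summable.of_nonneg_of_le (fun m => by positivity) _ hsum
      intro m
      have h1 : ‖q m‖ = ‖p m (fun _ => d v)‖ := ContinuousMultilinearMap.norm_mkPiRing _
      have h2 : ‖p m (fun _ => d v)‖ ≤ ‖p m‖ * ‖d v‖ ^ m := by
        have := (p m).le_opNorm (fun _ => d v)
        simpa [Finset.prod_const] using this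
      have h3 : (‖d v‖ : ℝ) * t ≤ r' := by
        have hMne : (M : ℝ) ≠ 0 := by
          exact_mod_cast hMpos.ne'
        have hMt : (M : ℝ) * (t : ℝ) = r' := by
          rw [ht, NNReal.coe_div]
          field_simp
        have hdM : (‖d v‖ : ℝ) ≤ (M : ℝ) := by
          rw [hM]
          simp only [NNReal.coe_add, coe_nnnorm, NNReal.coe_one]
          linarith
        calc (‖d v‖ : ℝ) * t ≤ (M : ℝ) * t :=
              mul_le_mul_of_nonneg_right hdM t.coe_nonneg
            _ = r' := hMt
      calc ‖q m‖ * (t : ℝ) ^ m = ‖p m (fun _ => d v)‖ * (t : ℝ) ^ m := by rw [h1]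
        _ ≤ ‖p m‖ * ‖d v‖ ^ m * (t : ℝ) ^ m := by
            apply mul_le_mul_of_nonneg_right h2 (by positivity)
        _ = ‖p m‖ * (‖d v‖ * (t : ℝ)) ^ m := by rw [mul_pow]; ring
        _ ≤ ‖p m‖ * (r' : ℝ) ^ m := by
            apply mul_le_mul_of_nonneg_left _ (norm_nonneg _)
            exact pow_le_pow_left₀ (by positivity) h3 m
    have htrad : (t : ENNReal) ≤ q.radius := q.le_radius_of_summable hqsum
    -- the ball radius for the power series of the zero function
    set ρ : ENNReal := min (t : ENNReal) (ENNReal.ofReal ε) with hρ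
    have hρpos : 0 < ρ := by
      apply lt_min
      · exact_mod_cast htpos
      · exact ENNReal.ofReal_pos.mpr hε
    have hzero : HasFPowerSeriesOnBall (0 : ℝ → ℝ) q 0 ρ :=
      { r_le := le_trans (min_le_left _ _) htrad
        r_pos := hρpos
        hasSum := by
          intro y hy
          have hyε : |y| < ε := by
            have h1 : y ∈ Metric.eball (0 : ℝ) (ENNReal.ofReal ε) :=
              EMetric.ball_subset_ball (min_le_right _ _) hy
            rw [EMetric.mem_ball, edist_dist, Real.dist_eq, sub_zero] at h1
            rwa [ENNReal.ofReal_lt_ofReal_iff hε] at h1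
          obtain ⟨hyW, hyball⟩ := hmem y v hyε hv
          have hsum2 := hpb.hasSum (by simpa using hyball)
          have hfz : f (0 + y • d v) = 0 := by
            have h5 : y • d v = (y, y * v, y * v * Real.exp v) := by
              simp [hd, Prod.ext_iff, smul_eq_mul, mul_assoc]
            rw [zero_add, h5]
            exact hvan (y, v) hyW
          rw [hfz] at hsum2
          convert hsum2 using 1
          funext m
          rw [hq]
          simp only [ContinuousMultilinearMap.mkPiRing_apply, Finset.prod_const,
            Finset.card_univ, Fintype.card_fin]
          have h6 := (p m).map_smul_univ (fun _ : Fin m => y) (fun _ => d v)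
          simpa [Finset.prod_const] using h6.symm
          rfl
          }
    have hq0 : HasFPowerSeriesAt (0 : ℝ → ℝ) q 0 := ⟨ρ, hzero⟩
    have := hq0.apply_eq_zero n 1
    simpa [hq, ContinuousMultilinearMap.mkPiRing_apply] using this
  -- all diagonal coefficients vanish
  have key2 : ∀ (n : ℕ) (y : ℝ × ℝ × ℝ), p n (fun _ => y) = 0 := by
    intro n
    exact osgood_aux_multilinear n (p n) ε hε (fun v hv => key n v hv)
  refine ⟨Metric.eball 0 r, EMetric.isOpen_ball, EMetric.mem_ball_self hpb.r_pos, ?_⟩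
  intro x hx
  have hsum3 := hpb.hasSum (y := x) (by simpa using hx)
  simp only [key2] at hsum3
  have := hsum3.unique hasSum_zero
  simpa using this
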